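/- For all real a > 0 and s > 0, ∫_0^∞ Erfc(a / (2√t)) e^{-st} dt = e^{-a√s} / s. -/

import Mathlib

open Real MeasureTheory
open Set

lemma glasser_meas (b : ℝ) : Measurable (fun u : ℝ => Real.exp (-(u - b/u)^2)) := by
  fun_prop

lemma glasser_integrable {b : ℝ} (hb : 0 < b) :
    IntegrableOn (fun u : ℝ => Real.exp (-(u - b/u)^2)) (Ioi 0) := by
  have hg : Integrable (fun u : ℝ => Real.exp (2*b) * Real.exp (-u^2)) := by
    simpa [neg_one_mul] using (integrable_exp_neg_mul_sq (b := 1) one_pos).const_mul (Real.exp (2*b))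
  refine Integrable.mono' hg.integrableOn ((glasser_meas b).aestronglyMeasurable) ?_
  filter_upwards [ae_restrict_mem measurableSet_Ioi] with u hu
  rw [Real.norm_eq_abs, abs_of_pos (Real.exp_pos _), ← Real.exp_add]
  apply Real.exp_le_exp.2
  have hu0 : u ≠ 0 := ne_of_gt hu
  have : (u - b/u)^2 = u^2 - 2*b + (b/u)^2 := by field_simp; ring
  nlinarith [sq_nonneg (b/u)]

lemma glasser_subst {b : ℝ} (hb : 0 < b) :
    (∫ u in Ioi (0:ℝ), (b/u^2) * Real.exp (-(u - b/u)^2))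
      = ∫ u in Ioi (0:ℝ), Real.exp (-(u - b/u)^2) ∧
    IntegrableOn (fun u : ℝ => (b/u^2) * Real.exp (-(u - b/u)^2)) (Ioi 0) := by
  have hderiv : ∀ x ∈ Ioi (0:ℝ), HasDerivWithinAt (fun u : ℝ => b/u) (-(b/x^2)) (Ioi 0) x := by
    intro x hx
    have h := ((hasDerivAt_inv (ne_of_gt hx)).const_mul b).hasDerivWithinAt (s := Ioi 0)
    simpa [div_eq_mul_inv, mul_neg] using h
  have hinj : InjOn (fun u : ℝ => b/u) (Ioi 0) := by
    intro x hx y hy h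
    have hx0 : x ≠ 0 := ne_of_gt hx
    have hy0 : y ≠ 0 := ne_of_gt hy
    simp only at h
    have : x = b / (b/x) := by field_simp
    rw [h] at this
    rw [this]; field_simp
  have himg : (fun u : ℝ => b/u) '' (Ioi 0) = Ioi 0 := by
    ext x; constructor
    · rintro ⟨y, hy, rfl⟩; exact div_pos hb hy
    · intro hx; exact ⟨b/x, div_pos hb hx, by field_simp⟩
  have key := integral_image_eq_integral_abs_deriv_smul measurableSet_Ioi hderiv hinj
    (fun u : ℝ => Real.exp (-(u - b/u)^2))
  rw [himg] at key
  have hcongr : ∀ x ∈ Ioi (0:ℝ),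
      |(-(b/x^2))| • Real.exp (-((b/x) - b/(b/x))^2) = (b/x^2) * Real.exp (-(x - b/x)^2) := by
    intro x hx
    have hx0 : x ≠ 0 := ne_of_gt hx
    have h1 : b/(b/x) = x := by field_simp
    have h2 : |(-(b/x^2))| = b/x^2 := by
      rw [abs_neg, abs_of_pos (div_pos hb (pow_pos hx 2))]
    rw [h1, h2, smul_eq_mul]
    congr 2
    ring
  rw [setIntegral_congr_fun measurableSet_Ioi hcongr] at key
  constructor
  · exact key.symm
  · have hiff := integrableOn_image_iff_integrableOn_abs_deriv_smul measurableSet_Ioi hderiv hinj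
      (fun u : ℝ => Real.exp (-(u - b/u)^2))
    rw [himg] at hiff
    have := hiff.mp (glasser_integrable hb)
    refine this.congr_fun ?_ measurableSet_Ioi
    intro x hx
    exact hcongr x hx

lemma glasser_value {b : ℝ} (hb : 0 < b) :
    ∫ u in Ioi (0:ℝ), Real.exp (-(u - b/u)^2) = Real.sqrt π / 2 := by
  have hderiv : ∀ x ∈ Ioi (0:ℝ),
      HasDerivWithinAt (fun u : ℝ => u - b/u) (1 + b/x^2) (Ioi 0) x := by
    intro x hx
    have h := ((hasDerivAt_id x).sub ((hasDerivAt_inv (ne_of_gt hx)).const_mul b)).hasDerivWithinAt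
      (s := Ioi 0)
    have : (1:ℝ) - b * -(x^2)⁻¹ = 1 + b/x^2 := by rw [div_eq_mul_inv]; ring
    simpa [div_eq_mul_inv, this, Pi.sub_def] using h
  have hinj : InjOn (fun u : ℝ => u - b/u) (Ioi 0) := by
    apply StrictMonoOn.injOn
    intro x hx y hy hxy
    have h1 : b/y < b/x := div_lt_div_of_pos_left hb (mem_Ioi.mp hx) hxy
    simp only
    linarith
  have himg : (fun u : ℝ => u - b/u) '' (Ioi 0) = univ := by
    refine eq_univ_of_forall (fun w => ?_)
    have h4b : (0:ℝ) ≤ w^2 + 4*b := by nlinarith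
    set r := Real.sqrt (w^2 + 4*b) with hr_def
    have hr2 : r^2 = w^2 + 4*b := Real.sq_sqrt h4b
    have hrnn : 0 ≤ r := Real.sqrt_nonneg _
    have hu : 0 < (w + r)/2 := by nlinarith
    refine ⟨(w + r)/2, hu, ?_⟩
    have hwr : 0 < w + r := by linarith
    have hwr0 : w + r ≠ 0 := ne_of_gt hwr
    show (w + r)/2 - b/((w + r)/2) = w
    field_simp
    nlinarith [hr2]
  have key := integral_image_eq_integral_abs_deriv_smul measurableSet_Ioi hderiv hinj
    (fun w : ℝ => Real.exp (-w^2))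
  rw [himg, Measure.restrict_univ] at key
  have hgauss : ∫ x : ℝ, Real.exp (-x^2) = Real.sqrt π := by
    simpa [neg_one_mul] using integral_gaussian 1
  have hcongr : ∀ x ∈ Ioi (0:ℝ),
      |1 + b/x^2| • Real.exp (-(x - b/x)^2)
        = Real.exp (-(x - b/x)^2) + (b/x^2) * Real.exp (-(x - b/x)^2) := by
    intro x hx
    have hpos : (0:ℝ) < 1 + b/x^2 := by positivity
    rw [abs_of_pos hpos, smul_eq_mul]
    ring
  rw [setIntegral_congr_fun measurableSet_Ioi hcongr] at key
  rw [integral_add (glasser_integrable hb) (glasser_subst hb).2] at key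
  rw [(glasser_subst hb).1] at key
  rw [hgauss] at key
  linarith

lemma glasser_exp {b : ℝ} (hb : 0 < b) :
    ∫ u in Ioi (0:ℝ), Real.exp (-u^2 - b^2/u^2) = Real.sqrt π / 2 * Real.exp (-(2*b)) := by
  have hcongr : ∀ u ∈ Ioi (0:ℝ),
      Real.exp (-u^2 - b^2/u^2) = Real.exp (-(u - b/u)^2) * Real.exp (-(2*b)) := by
    intro u hu
    have hu0 : u ≠ 0 := ne_of_gt hu
    rw [← Real.exp_add]
    congr 1
    field_simp
    ring
  rw [setIntegral_congr_fun measurableSet_Ioi hcongr, integral_mul_const, glasser_value hb]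

/-- Complementary error function Erfc(x) := (2/√π) ∫_x^∞ e^{-u²} du. -/
noncomputable def Erfc (x : ℝ) : ℝ :=
  (2 / Real.sqrt Real.pi) * ∫ u in Set.Ioi x, Real.exp (-u ^ 2)

/-- For a > 0 and s > 0,
∫_0^∞ Erfc(a/(2√t)) e^{-st} dt = e^{-a√s}/s. -/
theorem stmt_15 (a s : ℝ) (ha : 0 < a) (hs : 0 < s) :
    ∫ t in Set.Ioi (0 : ℝ), Erfc (a / (2 * Real.sqrt t)) * Real.exp (-s * t)
      = Real.exp (-a * Real.sqrt s) / s := by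
  set μ := volume.restrict (Ioi (0:ℝ)) with hμ
  set S : Set (ℝ × ℝ) := {q : ℝ × ℝ | a^2/(4*q.2^2) < q.1} with hS
  set F : ℝ × ℝ → ℝ :=
    S.indicator (fun q => Real.exp (-(s*q.1)) * Real.exp (-q.2^2)) with hF
  have hSmeas : MeasurableSet S := by
    apply measurableSet_lt
    · fun_prop
    · exact measurable_fst
  have hFmeas : Measurable F := (by fun_prop : Measurable
      (fun q : ℝ × ℝ => Real.exp (-(s*q.1)) * Real.exp (-q.2^2))).indicator hSmeas
  have h1 : Integrable (fun t : ℝ => Real.exp (-(s*t))) μ := by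
    exact (by simpa [neg_mul] using exp_neg_integrableOn_Ioi 0 hs :
      IntegrableOn (fun t : ℝ => Real.exp (-(s*t))) (Ioi 0))
  have h2 : Integrable (fun u : ℝ => Real.exp (-u^2)) μ := by
    exact (by simpa [neg_one_mul] using (integrable_exp_neg_mul_sq one_pos).integrableOn :
      IntegrableOn (fun u : ℝ => Real.exp (-u^2)) (Ioi 0))
  have hdom : Integrable (fun p : ℝ × ℝ => Real.exp (-(s*p.1)) * Real.exp (-p.2^2)) (μ.prod μ) :=
    h1.mul_prod h2
  have hFint : Integrable F (μ.prod μ) := by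
    refine hdom.mono' hFmeas.aestronglyMeasurable ?_
    filter_upwards with p
    rw [Real.norm_eq_abs]
    by_cases hp : p ∈ S
    · rw [hF, Set.indicator_of_mem hp]
      rw [abs_of_nonneg (by positivity)]
    · rw [hF, Set.indicator_of_notMem hp, abs_zero]
      positivity
  -- rewrite integrand for t > 0
  have hsection : ∀ t ∈ Ioi (0:ℝ),
      Erfc (a / (2 * Real.sqrt t)) * Real.exp (-s * t)
        = (2 / Real.sqrt π) * ∫ u, F (t, u) ∂μ := by
    intro t ht
    have hst : 0 < Real.sqrt t := Real.sqrt_pos.mpr ht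
    have hst2 : Real.sqrt t ^ 2 = t := Real.sq_sqrt ht.le
    set x := a / (2 * Real.sqrt t) with hx
    have hx0 : 0 < x := div_pos ha (by positivity)
    have heq : ∀ u ∈ Ioi (0:ℝ),
        F (t, u) = (Ioi x).indicator (fun v => Real.exp (-v^2)) u * Real.exp (-(s*t)) := by
      intro u hu
      have hiff : (t, u) ∈ S ↔ u ∈ Ioi x := by
        simp only [hS, mem_setOf_eq, mem_Ioi, hx]
        have hu0 : (0:ℝ) < u := hu
        have h4u : (0:ℝ) < 4 * u^2 := by positivity
        have h2st : (0:ℝ) < 2 * Real.sqrt t := by linarith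
        constructor
        · intro h
          rw [div_lt_iff₀ h4u] at h
          rw [div_lt_iff₀ h2st]
          nlinarith [hst2, mul_pos hu0 h2st]
        · intro h
          rw [div_lt_iff₀ h2st] at h
          rw [div_lt_iff₀ h4u]
          nlinarith [hst2, mul_pos hu0 h2st]
      by_cases hmem : (t, u) ∈ S
      · rw [hF, Set.indicator_of_mem hmem, Set.indicator_of_mem (hiff.mp hmem)]
        ring
      · rw [hF, Set.indicator_of_notMem hmem,
          Set.indicator_of_notMem (fun h => hmem (hiff.mpr h)), zero_mul]
    rw [hμ, setIntegral_congr_fun measurableSet_Ioi heq, integral_mul_const,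
      setIntegral_indicator measurableSet_Ioi, Set.Ioi_inter_Ioi,
      max_eq_right hx0.le]
    rw [Erfc, show -s * t = -(s*t) from neg_mul s t, mul_assoc]
  rw [setIntegral_congr_fun measurableSet_Ioi hsection]
  rw [show (volume.restrict (Ioi (0:ℝ))) = μ from rfl, MeasureTheory.integral_const_mul]
  have hFint' : Integrable (Function.uncurry fun t u => F (t, u)) (μ.prod μ) := by
    simpa [Function.uncurry_def] using hFint
  rw [integral_integral_swap hFint']
  -- inner integral in t
  set b := a * Real.sqrt s / 2 with hb_def
  have hb : 0 < b := by positivity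
  have hss : Real.sqrt s ^ 2 = s := Real.sq_sqrt hs.le
  have hinner : ∀ u ∈ Ioi (0:ℝ),
      (∫ t, F (t, u) ∂μ) = Real.exp (-u^2 - b^2/u^2) * (1/s) := by
    intro u hu
    have hu0 : (0:ℝ) < u := hu
    set c := a^2/(4*u^2) with hc
    have hc0 : 0 < c := by positivity
    have heq : ∀ t ∈ Ioi (0:ℝ),
        F (t, u) = (Ioi c).indicator (fun t => Real.exp (-(s*t))) t * Real.exp (-u^2) := by
      intro t _
      by_cases hmem : (t, u) ∈ S
      · have htc : t ∈ Ioi c := by simpa [hS, mem_Ioi, hc] using hmem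
        rw [hF, Set.indicator_of_mem hmem, Set.indicator_of_mem htc]
      · have htc : t ∉ Ioi c := by simpa [hS, mem_Ioi, hc] using hmem
        rw [hF, Set.indicator_of_notMem hmem, Set.indicator_of_notMem htc, zero_mul]
    rw [hμ, setIntegral_congr_fun measurableSet_Ioi heq, integral_mul_const,
      setIntegral_indicator measurableSet_Ioi, Set.Ioi_inter_Ioi, max_eq_right hc0.le]
    have hexp : ∫ t in Ioi c, Real.exp (-(s*t)) = Real.exp (-(s*c)) / s := by
      have h := integral_comp_mul_left_Ioi (fun y => Real.exp (-y)) c hs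
      simp only [smul_eq_mul] at h
      rw [h, integral_exp_neg_Ioi]
      ring
    rw [hexp]
    have hb2 : b^2 = a^2*s/4 := by
      rw [hb_def, div_pow, mul_pow, hss]; norm_num
    have : -(s*c) + -u^2 = -u^2 - b^2/u^2 := by
      rw [hb2, hc]
      have hu0' : u ≠ 0 := ne_of_gt hu0
      field_simp
      ring
    rw [div_eq_mul_one_div, mul_comm (Real.exp (-(s*c))) (1/s), mul_assoc, ← Real.exp_add]
    rw [mul_comm (1/s), this]
  rw [setIntegral_congr_fun measurableSet_Ioi hinner, integral_mul_const, glasser_exp hb]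
  have h2b : 2 * b = a * Real.sqrt s := by rw [hb_def]; ring
  rw [h2b]
  have hπ : Real.sqrt π ≠ 0 := ne_of_gt (Real.sqrt_pos.mpr Real.pi_pos)
  field_simp
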